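/- For real a, b with a² + b² = 1 and every q ∈ (1, 3/2], the quantity M_q = (1 - a^{2q}/2^{q-1} - b^{2q}/2^{q-1})^{2/q} - (1 - a^{2q} - b^{2q})^{2/q} - (1 - (1/2)^{q-1})^{2/q} is nonnegative. -/

import Mathlib

open Set Real

private lemma sgqc_aux_concave (p t : ℝ) (hp1 : 1 < p) (hp2 : p ≤ 2) (ht0 : 0 ≤ t)
    (ht1 : t ≤ 1) :
    ConcaveOn ℝ (Icc (0:ℝ) 1) (fun x : ℝ => (1 + x * t) ^ p - x ^ p) := by
  have hp0 : (0:ℝ) < p := lt_trans one_pos hp1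
  apply concaveOn_of_hasDerivWithinAt2_nonpos (convex_Icc 0 1)
    (f' := fun x => p * (1 + x * t) ^ (p - 1) * t - p * x ^ (p - 1))
    (f'' := fun x => p * (p - 1) * (1 + x * t) ^ (p - 2) * t * t - p * (p - 1) * x ^ (p - 2))
  · intro x hx
    have c1 : ContinuousAt (fun x : ℝ => (1 + x * t) ^ p) x := by
      exact (Real.continuousAt_rpow_const _ _ (Or.inr hp0.le)).comp
        ((continuous_const.add (continuous_id.mul continuous_const)).continuousAt)
    have c2 : ContinuousAt (fun x : ℝ => x ^ p) x :=
      Real.continuousAt_rpow_const _ _ (Or.inr hp0.le)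
    exact (c1.sub c2).continuousWithinAt
  · rw [interior_Icc]
    intro x hx
    obtain ⟨hx0, hx1⟩ := hx
    have h1t : (0:ℝ) < 1 + x * t := by nlinarith
    have A : HasDerivAt (fun x : ℝ => 1 + x * t) t x := by
      simpa using ((hasDerivAt_id x).mul_const t).const_add 1
    have B : HasDerivAt (fun x : ℝ => (1 + x * t) ^ p) (p * (1 + x * t) ^ (p - 1) * t) x := by
      exact (Real.hasDerivAt_rpow_const (p := p) (Or.inl h1t.ne')).comp x A
    have C : HasDerivAt (fun x : ℝ => x ^ p) (p * x ^ (p - 1)) x :=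
      Real.hasDerivAt_rpow_const (Or.inl hx0.ne')
    exact (B.sub C).hasDerivWithinAt
  · rw [interior_Icc]
    intro x hx
    obtain ⟨hx0, hx1⟩ := hx
    have h1t : (0:ℝ) < 1 + x * t := by nlinarith
    have A : HasDerivAt (fun x : ℝ => 1 + x * t) t x := by
      simpa using ((hasDerivAt_id x).mul_const t).const_add 1
    have B : HasDerivAt (fun x : ℝ => (1 + x * t) ^ (p - 1))
        ((p - 1) * (1 + x * t) ^ (p - 2) * t) x := by
      rw [show p - 2 = p - 1 - 1 by ring]
      exact (Real.hasDerivAt_rpow_const (p := p - 1) (Or.inl h1t.ne')).comp x A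
    have C : HasDerivAt (fun x : ℝ => x ^ (p - 1)) ((p - 1) * x ^ (p - 2)) x := by
      have h := Real.hasDerivAt_rpow_const (p := p - 1) (x := x) (Or.inl hx0.ne')
      convert h using 2
      ring_nf
    have D : HasDerivAt (fun x : ℝ => p * (1 + x * t) ^ (p - 1) * t - p * x ^ (p - 1))
        (p * ((p - 1) * (1 + x * t) ^ (p - 2) * t) * t - p * ((p - 1) * x ^ (p - 2))) x :=
      ((B.const_mul p).mul_const t).sub (C.const_mul p)
    exact D.hasDerivWithinAt.congr_deriv (by ring)
  · rw [interior_Icc]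
    intro x hx
    obtain ⟨hx0, hx1⟩ := hx
    have h1t : (1:ℝ) ≤ 1 + x * t := by nlinarith
    have e1 : (1 + x * t) ^ (p - 2) ≤ 1 :=
      Real.rpow_le_one_of_one_le_of_nonpos h1t (by linarith)
    have e2 : (1:ℝ) ≤ x ^ (p - 2) :=
      Real.one_le_rpow_of_pos_of_le_one_of_nonpos hx0 hx1.le (by linarith)
    have e3 : (0:ℝ) ≤ (1 + x * t) ^ (p - 2) := Real.rpow_nonneg (by linarith) _
    have hpp : (0:ℝ) ≤ p * (p - 1) := by nlinarith
    have key : (1 + x * t) ^ (p - 2) * (t * t) ≤ x ^ (p - 2) := by nlinarith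
    nlinarith

private lemma sgqc_aux_key (p t l : ℝ) (hp1 : 1 < p) (hp2 : p ≤ 2) (ht0 : 0 ≤ t) (ht1 : t ≤ 1)
    (hend : 2 ≤ (1 + t) ^ p) (hl0 : 0 ≤ l) (hl1 : l ≤ 1) :
    1 + l ^ p ≤ (1 + l * t) ^ p := by
  have hp0 : (0:ℝ) < p := lt_trans one_pos hp1
  have hc := sgqc_aux_concave p t hp1 hp2 ht0 ht1
  have h := hc.2 (show (0:ℝ) ∈ Icc (0:ℝ) 1 by norm_num)
    (show (1:ℝ) ∈ Icc (0:ℝ) 1 by norm_num)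
    (show (0:ℝ) ≤ 1 - l by linarith) hl0 (by ring)
  simp only [smul_eq_mul, mul_zero, mul_one, zero_add, zero_mul, add_zero, one_mul] at h
  rw [Real.zero_rpow hp0.ne', Real.one_rpow] at h
  nlinarith [mul_le_mul_of_nonneg_left hend hl0]

private lemma sgqc_aux_endpoint (q : ℝ) (hq1 : 1 < q) (hq2 : q ≤ 3 / 2) :
    (2:ℝ) ^ (q / 2) ≤ 1 + (2:ℝ) ^ (1 - q) := by
  set u := (2:ℝ) ^ (q / 2) with hu
  set v := (2:ℝ) ^ ((3:ℝ) / 4) with hv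
  have hu0 : 0 < u := Real.rpow_pos_of_pos two_pos _
  have hv0 : 0 < v := Real.rpow_pos_of_pos two_pos _
  have hu1 : (1:ℝ) ≤ u := by
    have h := Real.rpow_le_rpow_of_exponent_le (x := 2) one_le_two
      (by linarith : (0:ℝ) ≤ q / 2)
    simpa using h
  have huv : u ≤ v := Real.rpow_le_rpow_of_exponent_le one_le_two (by linarith)
  have hr0 : (0:ℝ) ≤ Real.sqrt 2 := Real.sqrt_nonneg 2
  have hr2 : Real.sqrt 2 * Real.sqrt 2 = 2 := Real.mul_self_sqrt (by norm_num)
  have hr54 : (5:ℝ) / 4 ≤ Real.sqrt 2 := by nlinarith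
  have h15 : (2:ℝ) ^ ((3:ℝ) / 2) = 2 * Real.sqrt 2 := by
    rw [Real.sqrt_eq_rpow, show (3:ℝ)/2 = 1 + 1/2 by norm_num, Real.rpow_add two_pos,
      Real.rpow_one]
  have hv2 : v * v = 2 * Real.sqrt 2 := by
    rw [hv, ← Real.rpow_add two_pos, show (3:ℝ)/4 + (3:ℝ)/4 = (3:ℝ)/2 by norm_num, h15]
  have hv3 : v * v * v ≤ 2 + 2 * Real.sqrt 2 := by
    have hvvv : v * v * v = (2:ℝ) ^ ((9:ℝ) / 4) := by
      rw [hv, ← Real.rpow_add two_pos, ← Real.rpow_add two_pos]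
      norm_num
    have h4 : ((2:ℝ) ^ ((9:ℝ) / 4)) ^ (4:ℕ) ≤ (2 + 2 * Real.sqrt 2) ^ (4:ℕ) := by
      have h9 : ((2:ℝ) ^ ((9:ℝ) / 4)) ^ (4:ℕ) = (2:ℝ) ^ ((9:ℝ)) := by
        rw [← Real.rpow_natCast ((2:ℝ) ^ ((9:ℝ) / 4)) 4, ← Real.rpow_mul (by norm_num)]
        norm_num
      have h512 : (2:ℝ) ^ ((9:ℝ)) = 512 := by
        rw [show (9:ℝ) = ((9:ℕ):ℝ) by norm_num, Real.rpow_natCast]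
        norm_num
      rw [h9, h512]
      nlinarith
    have h5 := le_of_pow_le_pow_left₀ (by norm_num) (by nlinarith) h4
    rw [hvvv]
    linarith
  have huuu : u * u * u ≤ u * u + 2 := by
    have h1 : u * u ≤ v * v := by nlinarith
    have h2 : u * u * (u - 1) ≤ v * v * (v - 1) := by
      apply mul_le_mul h1 (by linarith) (by linarith) (by nlinarith)
    nlinarith
  have h2q : (2:ℝ) ^ (1 - q) = 2 / (u * u) := by
    have huu : u * u = (2:ℝ) ^ q := by
      rw [hu, ← Real.rpow_add two_pos]
      norm_num
    rw [huu, Real.rpow_sub two_pos, Real.rpow_one]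
  rw [h2q]
  have huu0 : 0 < u * u := by positivity
  have hmain : u ≤ (u * u + 2) / (u * u) := by
    rw [le_div_iff₀ huu0]
    nlinarith
  calc u ≤ (u * u + 2) / (u * u) := hmain
    _ = 1 + 2 / (u * u) := by field_simp

private lemma sgqc_rpow_le_self {x q : ℝ} (hx0 : 0 ≤ x) (hx1 : x ≤ 1) (hq : 1 ≤ q) :
    x ^ q ≤ x := by
  rcases eq_or_lt_of_le hx0 with h | h
  · rw [← h, Real.zero_rpow (by linarith : q ≠ 0)]
  · calc x ^ q ≤ x ^ (1:ℝ) := Real.rpow_le_rpow_of_exponent_ge h hx1 hq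
      _ = x := Real.rpow_one x

set_option maxHeartbeats 1000000 in
theorem sgqc_monogamy_422 (a b q : ℝ) (hab : a ^ 2 + b ^ 2 = 1)
    (hq1 : 1 < q) (hq2 : q ≤ 3 / 2) :
    0 ≤ (1 - (a ^ 2) ^ q / (2:ℝ) ^ (q - 1) - (b ^ 2) ^ q / (2:ℝ) ^ (q - 1)) ^ (2 / q)
        - (1 - (a ^ 2) ^ q - (b ^ 2) ^ q) ^ (2 / q)
        - (1 - ((1:ℝ) / 2) ^ (q - 1)) ^ (2 / q) := by
  have hq0 : (0:ℝ) < q := by linarith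
  set x := a ^ 2 with hxdef
  set y := b ^ 2 with hydef
  have hx0 : (0:ℝ) ≤ x := sq_nonneg a
  have hy0 : (0:ℝ) ≤ y := sq_nonneg b
  have hx1 : x ≤ 1 := by nlinarith
  have hy1 : y ≤ 1 := by nlinarith
  set T := (2:ℝ) ^ (1 - q) with hTdef
  have hT0 : (0:ℝ) < T := Real.rpow_pos_of_pos two_pos _
  have hT1 : T < 1 := Real.rpow_lt_one_of_one_lt_of_neg one_lt_two (by linarith)
  have hTinv : T = ((2:ℝ) ^ (q - 1))⁻¹ := by
    rw [hTdef, ← Real.rpow_neg (by norm_num : (0:ℝ) ≤ 2), neg_sub]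
  have hhalf : ((1:ℝ) / 2) ^ (q - 1) = T := by
    rw [hTdef, one_div, Real.inv_rpow (by norm_num : (0:ℝ) ≤ 2),
      ← Real.rpow_neg (by norm_num : (0:ℝ) ≤ 2), neg_sub]
  set s := x ^ q + y ^ q with hsdef
  have hs0 : 0 ≤ s := by positivity
  have hs1 : s ≤ 1 := by
    have h1 := sgqc_rpow_le_self hx0 hx1 hq1.le
    have h2 := sgqc_rpow_le_self hy0 hy1 hq1.le
    have hxy : x + y = 1 := hab
    rw [hsdef]
    linarith
  have hs2 : T ≤ s := by
    have hpm := Real.rpow_arith_mean_le_arith_mean_rpow (Finset.univ : Finset (Fin 2))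
      ![1/2, 1/2] ![x, y]
      (by intro i _; fin_cases i <;> norm_num)
      (by norm_num [Fin.sum_univ_two])
      (by intro i _; fin_cases i
          · simpa using hx0
          · simpa using hy0)
      hq1.le
    simp only [Fin.sum_univ_two, Matrix.cons_val_zero, Matrix.cons_val_one,
      Matrix.head_cons] at hpm
    have e : (1:ℝ)/2 * x + 1/2 * y = 1/2 := by
      have hxy : x + y = 1 := hab
      linarith
    rw [e] at hpm
    have hT2 : T = 2 * ((1:ℝ)/2) ^ q := by
      rw [hTdef, one_div, Real.inv_rpow (by norm_num : (0:ℝ) ≤ 2),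
        ← Real.rpow_neg (by norm_num : (0:ℝ) ≤ 2),
        show (1:ℝ) - q = 1 + -q by ring, Real.rpow_add two_pos, Real.rpow_one]
    rw [hT2, hsdef]
    linarith
  set l := (1 - s) / (1 - T) with hldef
  have hlt : (0:ℝ) < 1 - T := by linarith
  have hl0 : 0 ≤ l := div_nonneg (by linarith) hlt.le
  have hl1 : l ≤ 1 := (div_le_one hlt).mpr (by linarith)
  have hsl : 1 - (x ^ q + y ^ q) = l * (1 - T) := by
    rw [hldef, div_mul_cancel₀ _ hlt.ne', hsdef]
  set p := 2 / q with hpdef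
  have hp1 : 1 < p := (one_lt_div hq0).mpr (by linarith)
  have hp2 : p ≤ 2 := by
    rw [hpdef, div_le_iff₀ hq0]
    nlinarith
  have hp0 : (0:ℝ) < p := lt_trans one_pos hp1
  have hend : (2:ℝ) ≤ (1 + T) ^ p := by
    have h := sgqc_aux_endpoint q hq1 hq2
    have h2 : ((2:ℝ) ^ (q / 2)) ^ p ≤ (1 + T) ^ p :=
      Real.rpow_le_rpow (Real.rpow_nonneg (by norm_num) _) h hp0.le
    have h3 : ((2:ℝ) ^ (q / 2)) ^ p = 2 := by
      rw [← Real.rpow_mul (by norm_num : (0:ℝ) ≤ 2), hpdef,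
        show q / 2 * (2 / q) = 1 by field_simp, Real.rpow_one]
    linarith [h3 ▸ h2]
  have hkey := sgqc_aux_key p T l hp1 hp2 hT0.le hT1.le hend hl0 hl1
  have hA : 1 - x ^ q / (2:ℝ) ^ (q - 1) - y ^ q / (2:ℝ) ^ (q - 1) = (1 - T) * (1 + l * T) := by
    rw [div_eq_mul_inv, div_eq_mul_inv, ← hTinv]
    linear_combination T * hsl
  have hB : 1 - x ^ q - y ^ q = l * (1 - T) := by linear_combination hsl
  have hC : 1 - ((1:ℝ) / 2) ^ (q - 1) = 1 - T := by rw [hhalf]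
  rw [hA, hB, hC]
  rw [Real.mul_rpow hlt.le (by nlinarith : (0:ℝ) ≤ 1 + l * T)]
  rw [Real.mul_rpow hl0 hlt.le]
  have hTp : (0:ℝ) ≤ (1 - T) ^ p := Real.rpow_nonneg hlt.le _
  nlinarith [mul_le_mul_of_nonneg_left hkey hTp]
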